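/- Let Q = (V_0, V_1, V_2, V_3, W) be a non-degenerate quintuple over a field k: each V_i is a two-dimensional vector space and W = kw is a one-dimensional subspace of V_0 ⊗ V_1 ⊗ V_2 ⊗ V_3 with w strongly non-degenerate. Write w = r_1 ⊗ v_1 + r_2 ⊗ v_2 with {v_1, v_2} a basis of V_3 and r_1, r_2 ∈ V_0 ⊗ V_1 ⊗ V_2. Then: (a) the subspace R = kr_1 + kr_2 is two-dimensional and independent of the choices of w, v_1, v_2; and (b) Q is isomorphic to the quintuple (V_0, V_1, V_2, R^*, r_1 ⊗ r_1^* + r_2 ⊗ r_2^*), so Q is determined up to isomorphism by R ⊆ V_0 ⊗ V_1 ⊗ V_2. -/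
import Mathlib


open Module TensorProduct

set_option maxHeartbeats 2000000

/-- a non-degenerate quintuple `Q = (V0, V1, V2, V3, k·w)` is determined by
the subspace `R ⊆ V0 ⊗ V1 ⊗ V2`.  Here each `V_i` is two-dimensional and
`w ∈ ((V0 ⊗ V1) ⊗ V2) ⊗ V3` is strongly non-degenerate (for each slot `j`, the induced
map `V_j^* → (remaining factors)` is injective; hypotheses `hnd0–hnd3`).  Given a
decomposition `w = r1 ⊗ v1 + r2 ⊗ v2` with `{v1, v2}` a basis of `V3`:
(a) `R = span{r1, r2}` is two-dimensional and independent of the chosen decomposition;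
(b) there is a linear isomorphism `g : V3 ≃ R^*` carrying `w` to the canonical tensor
`r1 ⊗ r1^* + r2 ⊗ r2^*`, i.e. `Q ≅ (V0, V1, V2, R^*, r1 ⊗ r1^* + r2 ⊗ r2^*)`. -/
theorem nondegenerate_quintuple_determined_by_R
    (k V0 V1 V2 V3 : Type) [Field k]
    [AddCommGroup V0] [Module k V0] [FiniteDimensional k V0]
    [AddCommGroup V1] [Module k V1] [FiniteDimensional k V1]
    [AddCommGroup V2] [Module k V2] [FiniteDimensional k V2]
    [AddCommGroup V3] [Module k V3] [FiniteDimensional k V3]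
    (hd0 : finrank k V0 = 2) (hd1 : finrank k V1 = 2)
    (hd2 : finrank k V2 = 2) (hd3 : finrank k V3 = 2)
    (w : ((V0 ⊗[k] V1) ⊗[k] V2) ⊗[k] V3)
    -- strong non-degeneracy of w in each of the four slots
    (hnd0 : ∀ φ : V0 →ₗ[k] k,
      TensorProduct.map (TensorProduct.map (TensorProduct.map φ LinearMap.id)
        LinearMap.id) LinearMap.id w = 0 → φ = 0)
    (hnd1 : ∀ φ : V1 →ₗ[k] k,
      TensorProduct.map (TensorProduct.map (TensorProduct.map LinearMap.id φ)
        LinearMap.id) LinearMap.id w = 0 → φ = 0)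
    (hnd2 : ∀ φ : V2 →ₗ[k] k,
      TensorProduct.map (TensorProduct.map LinearMap.id φ) LinearMap.id w = 0 → φ = 0)
    (hnd3 : ∀ φ : V3 →ₗ[k] k,
      TensorProduct.map LinearMap.id φ w = 0 → φ = 0)
    -- the decomposition w = r1 ⊗ v1 + r2 ⊗ v2 with {v1, v2} a basis of V3
    (r1 r2 : (V0 ⊗[k] V1) ⊗[k] V2) (v1 v2 : V3)
    (hbasis : ∃ b : Basis (Fin 2) k V3, b 0 = v1 ∧ b 1 = v2)
    (hw : w = r1 ⊗ₜ[k] v1 + r2 ⊗ₜ[k] v2) :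
    -- (a) R = span{r1, r2} is 2-dimensional and independent of all choices
    finrank k (Submodule.span k {r1, r2} : Submodule k ((V0 ⊗[k] V1) ⊗[k] V2)) = 2 ∧
    (∀ (r1' r2' : (V0 ⊗[k] V1) ⊗[k] V2) (v1' v2' : V3),
      (∃ b : Basis (Fin 2) k V3, b 0 = v1' ∧ b 1 = v2') →
      w = r1' ⊗ₜ[k] v1' + r2' ⊗ₜ[k] v2' →
      Submodule.span k {r1, r2} = Submodule.span k {r1', r2'}) ∧
    -- (b) Q ≅ (V0, V1, V2, R^*, r1 ⊗ r1^* + r2 ⊗ r2^*)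
    (∀ b : Basis (Fin 2) k (Submodule.span k {r1, r2} :
        Submodule k ((V0 ⊗[k] V1) ⊗[k] V2)),
      ((b 0 : ((V0 ⊗[k] V1) ⊗[k] V2)) = r1) → ((b 1 : ((V0 ⊗[k] V1) ⊗[k] V2)) = r2) →
      ∃ g : V3 ≃ₗ[k] Dual k (Submodule.span k {r1, r2} :
          Submodule k ((V0 ⊗[k] V1) ⊗[k] V2)),
        TensorProduct.map LinearMap.id g.toLinearMap w =
          (r1 ⊗ₜ[k] (b.coord (0 : Fin 2)) + r2 ⊗ₜ[k] (b.coord (1 : Fin 2)) :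
            ((V0 ⊗[k] V1) ⊗[k] V2) ⊗[k]
              Dual k (Submodule.span k {r1, r2} :
                Submodule k ((V0 ⊗[k] V1) ⊗[k] V2)))) := by
  classical
  obtain ⟨b3, hb30, hb31⟩ := hbasis
  -- key evaluation lemma
  have keygen : ∀ (a b : (V0 ⊗[k] V1) ⊗[k] V2) (u v : V3),
      w = a ⊗ₜ[k] u + b ⊗ₜ[k] v → ∀ φ : V3 →ₗ[k] k,
      (TensorProduct.rid k ((V0 ⊗[k] V1) ⊗[k] V2))
        ((TensorProduct.map LinearMap.id φ) w) = φ u • a + φ v • b := by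
    intro a b u v h φ
    rw [h]
    simp [TensorProduct.map_tmul, TensorProduct.rid_tmul]
  have key := keygen r1 r2 v1 v2 hw
  -- linear independence of r1, r2
  have hind : LinearIndependent k ![r1, r2] := by
    rw [LinearIndependent.pair_iff]
    intro s t hst
    set φ : V3 →ₗ[k] k := s • b3.coord 0 + t • b3.coord 1 with hφ
    have hv1 : φ v1 = s := by
      simp [hφ, ← hb30, Basis.coord_apply, Basis.repr_self_apply]
    have hv2 : φ v2 = t := by
      simp [hφ, ← hb31, Basis.coord_apply, Basis.repr_self_apply]
    have h0 : (TensorProduct.map LinearMap.id φ) w = 0 := by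
      apply (TensorProduct.rid k ((V0 ⊗[k] V1) ⊗[k] V2)).injective
      rw [key φ, hv1, hv2, hst]
      simp
    have hφ0 := hnd3 φ h0
    constructor
    · rw [← hv1, hφ0]; simp
    · rw [← hv2, hφ0]; simp
  have hset : ({r1, r2} : Set ((V0 ⊗[k] V1) ⊗[k] V2)) = Set.range ![r1, r2] := by
    ext x
    simp [Fin.exists_fin_two, eq_comm, or_comm]
  refine ⟨?_, ?_, ?_⟩
  · rw [hset, finrank_span_eq_card hind]
    simp
  · intro r1' r2' v1' v2' hb' hw'
    obtain ⟨b3', hb30', hb31'⟩ := hb'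
    have key' : ∀ φ : V3 →ₗ[k] k,
        φ v1 • r1 + φ v2 • r2 = φ v1' • r1' + φ v2' • r2' := by
      intro φ
      rw [← keygen r1 r2 v1 v2 hw φ, keygen r1' r2' v1' v2' hw' φ]
    have hmem : ∀ (a b : (V0 ⊗[k] V1) ⊗[k] V2) (c d : k),
        c • a + d • b ∈ Submodule.span k {a, b} := by
      intro a b c d
      exact Submodule.add_mem _
        (Submodule.smul_mem _ _ (Submodule.subset_span (by simp)))
        (Submodule.smul_mem _ _ (Submodule.subset_span (by simp)))
    apply le_antisymm
    · rw [Submodule.span_le]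
      rintro x (rfl | rfl)
      · have h := key' (b3.coord 0)
        simp only [← hb30, ← hb31, Basis.coord_apply, Basis.repr_self_apply] at h
        norm_num at h
        rw [h]
        exact hmem _ _ _ _
      · have h := key' (b3.coord 1)
        simp only [← hb30, ← hb31, Basis.coord_apply, Basis.repr_self_apply] at h
        norm_num at h
        rw [h]
        exact hmem _ _ _ _
    · rw [Submodule.span_le]
      rintro x (rfl | rfl)
      · have h := (key' (b3'.coord 0)).symm
        simp only [← hb30', ← hb31', Basis.coord_apply, Basis.repr_self_apply] at h
        norm_num at h
        rw [h]
        exact hmem _ _ _ _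
      · have h := (key' (b3'.coord 1)).symm
        simp only [← hb30', ← hb31', Basis.coord_apply, Basis.repr_self_apply] at h
        norm_num at h
        rw [h]
        exact hmem _ _ _ _
  · intro b hb0 hb1
    have htd : ∀ i : Fin 2, b.toDual (b i) = b.coord i := by
      intro i
      apply b.ext
      intro j
      simp [Basis.toDual_apply, Basis.coord_apply, Basis.repr_self_apply,
        Finsupp.single_apply, eq_comm]
    refine ⟨(b3.equiv b (Equiv.refl _)).trans (Basis.toDualEquiv (R := k)
        (M := (Submodule.span k {r1, r2} : Submodule k ((V0 ⊗[k] V1) ⊗[k] V2))) b), ?_⟩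
    have g1 : ((b3.equiv b (Equiv.refl _)).trans (Basis.toDualEquiv (R := k)
        (M := (Submodule.span k {r1, r2} : Submodule k ((V0 ⊗[k] V1) ⊗[k] V2))) b)) v1 = b.coord 0 := by
      rw [← hb30]
      simp only [LinearEquiv.trans_apply, Basis.equiv_apply, Equiv.refl_apply,
        Basis.toDualEquiv_apply]
      exact htd 0
    have g2 : ((b3.equiv b (Equiv.refl _)).trans (Basis.toDualEquiv (R := k)
        (M := (Submodule.span k {r1, r2} : Submodule k ((V0 ⊗[k] V1) ⊗[k] V2))) b)) v2 = b.coord 1 := by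
      rw [← hb31]
      simp only [LinearEquiv.trans_apply, Basis.equiv_apply, Equiv.refl_apply,
        Basis.toDualEquiv_apply]
      exact htd 1
    rw [hw]
    simp only [map_add, TensorProduct.map_tmul, LinearMap.id_coe, id_eq,
      LinearEquiv.coe_coe, g1, g2]
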